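/- Let p ≥ 1 be an integer, let α_0, α_1, …, α_p be positive reals, let β be a real with 0 < β < min_i α_i, and let C > 0. Let ψ : ℝ → ℝ be nondecreasing and right-continuous with |ψ(u) - Σ_{i=0}^p u^{α_i}/α_i| ≤ C u^β for all u ≥ 2. Then there exists C' > 0 such that for all x ≥ 4: |∫_{(2,x]} (log u)^{-1} dμ_ψ(u) - Σ_{i=0}^p li(x^{α_i})| ≤ C' x^β / log x. -/

import Mathlib

open MeasureTheory

/-- The logarithmic integral `li(z) = ∫_2^z dt / log t`. -/
noncomputable def li (z : ℝ) : ℝ := ∫ t in (2 : ℝ)..z, (Real.log t)⁻¹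

section helpers
open intervalIntegral Set

lemma hcont : ∀ ⦃s : Set ℝ⦄, (∀ t ∈ s, (2:ℝ) ≤ t) → ContinuousOn (fun t : ℝ => (t * Real.log t ^ 2)⁻¹) s := by
  intro s hs
  apply ContinuousOn.inv₀
  · exact continuousOn_id.mul ((Real.continuousOn_log.mono (fun t ht => by
      have := hs t ht; norm_num; linarith)).pow 2)
  · intro t ht
    have h2 := hs t ht
    have hl : 0 < Real.log t := Real.log_pos (by linarith)
    positivity

lemma ftc_h {u x : ℝ} (hu : 2 ≤ u) (hux : u ≤ x) :
    ∫ t in u..x, (t * Real.log t ^ 2)⁻¹ = (Real.log u)⁻¹ - (Real.log x)⁻¹ := by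
  have key : ∀ t ∈ Set.uIcc u x, HasDerivAt (fun y : ℝ => -(Real.log y)⁻¹)
      ((t * Real.log t ^ 2)⁻¹) t := by
    intro t ht
    rw [Set.uIcc_of_le hux] at ht
    have h2 : (2:ℝ) ≤ t := le_trans hu ht.1
    have ht0 : t ≠ 0 := by linarith
    have hl : 0 < Real.log t := Real.log_pos (by linarith)
    have := ((Real.hasDerivAt_log ht0).inv hl.ne').neg
    refine this.congr_deriv ?_
    symm
    have hlt : (0:ℝ) < t := by linarith
    field_simp
  have hint : IntervalIntegrable (fun t : ℝ => (t * Real.log t ^ 2)⁻¹) volume u x := by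
    apply ContinuousOn.intervalIntegrable
    apply hcont
    intro t ht
    rw [Set.uIcc_of_le hux] at ht; exact le_trans hu ht.1
  have := intervalIntegral.integral_eq_sub_of_hasDerivAt key hint
  rw [this]; ring

lemma h_nonneg {t : ℝ} (ht : 2 ≤ t) : 0 ≤ (t * Real.log t ^ 2)⁻¹ := by
  have hl : 0 < Real.log t := Real.log_pos (by linarith)
  positivity

lemma h_le {t : ℝ} (ht : 2 ≤ t) : (t * Real.log t ^ 2)⁻¹ ≤ (2 * Real.log 2 ^ 2)⁻¹ := by
  have hl2 : 0 < Real.log 2 := Real.log_pos (by norm_num)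
  have hlt : Real.log 2 ≤ Real.log t := Real.log_le_log (by norm_num) ht
  have h1 : (0:ℝ) < 2 * Real.log 2 ^ 2 := by positivity
  apply inv_anti₀ h1
  nlinarith

lemma intInt_rpow_mul_h {γ a b : ℝ} (h2 : 2 ≤ a) (hab : a ≤ b) :
    IntervalIntegrable (fun t : ℝ => t ^ γ * (t * Real.log t ^ 2)⁻¹) volume a b := by
  apply ContinuousOn.intervalIntegrable
  have hs : ∀ t ∈ Set.uIcc a b, (2:ℝ) ≤ t := fun t ht => by
    rw [Set.uIcc_of_le hab] at ht; linarith [ht.1]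
  exact (continuousOn_id.rpow_const fun t ht =>
    Or.inl (ne_of_gt (lt_of_lt_of_le two_pos (hs t ht)))).mul (hcont hs)

lemma intInt_h {a b : ℝ} (h2 : 2 ≤ a) (hab : a ≤ b) :
    IntervalIntegrable (fun t : ℝ => (t * Real.log t ^ 2)⁻¹) volume a b := by
  apply ContinuousOn.intervalIntegrable
  apply hcont
  intro t ht
  rw [Set.uIcc_of_le hab] at ht; linarith [ht.1]

lemma const_le_helper {K β lx xb : ℝ} (hK : 0 ≤ K) (hβ : 0 < β) (hlx : 0 < lx)
    (h : β * lx ≤ xb) : K ≤ K / β * xb / lx := by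
  rw [le_div_iff₀ hlx]
  have h1 : K / β * (β * lx) ≤ K / β * xb := mul_le_mul_of_nonneg_left h (div_nonneg hK hβ.le)
  have h2 : K / β * (β * lx) = K * lx := by
    rw [← mul_assoc, div_mul_cancel₀ _ hβ.ne']
  linarith

lemma half_helper {C2 β lx xh xb : ℝ} (hC2 : 0 ≤ C2) (hβ : 0 < β) (hlx : 0 < lx)
    (hk2 : β * (xh * lx) ≤ 2 * xb) : C2 * (xh / β) ≤ 2 * C2 / β ^ 2 * xb / lx := by
  have e1 : C2 * (xh / β) = C2 * xh / β := by ring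
  have e2 : 2 * C2 / β ^ 2 * xb / lx = 2 * C2 * xb / (β ^ 2 * lx) := by ring
  rw [e1, e2, div_le_div_iff₀ hβ (by positivity)]
  nlinarith [mul_le_mul_of_nonneg_left hk2 (mul_nonneg hC2 hβ.le)]

lemma hasDerivAt_li {z : ℝ} (hz : 1 < z) : HasDerivAt li (Real.log z)⁻¹ z := by
  apply intervalIntegral.integral_hasDerivAt_right
  · apply ContinuousOn.intervalIntegrable
    apply ContinuousOn.inv₀
    · apply Real.continuousOn_log.mono
      intro t ht
      rcases le_total 2 z with h | h
      · rw [Set.uIcc_of_le h] at ht; simp; linarith [ht.1]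
      · rw [Set.uIcc_of_ge h] at ht; simp; linarith [ht.1, hz]
    · intro t ht
      rcases le_total 2 z with h | h
      · rw [Set.uIcc_of_le h] at ht; exact (Real.log_pos (by linarith [ht.1])).ne'
      · rw [Set.uIcc_of_ge h] at ht; exact (Real.log_pos (by linarith [ht.1])).ne'
  · exact ⟨Set.univ, Filter.univ_mem, (Real.measurable_log.inv).aestronglyMeasurable⟩
  · exact (Real.continuousAt_log (by linarith)).inv₀ (Real.log_pos hz).ne'

lemma li_eq {α x : ℝ} (hα : 0 < α) (hx : 2 ≤ x) :
    li (x ^ α) - li ((2:ℝ) ^ α)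
      = (x ^ α / α / Real.log x - (2:ℝ) ^ α / α / Real.log 2)
        + ∫ t in (2:ℝ)..x, (t ^ α / α) * (t * Real.log t ^ 2)⁻¹ := by
  have hk : ∀ t ∈ Set.uIcc (2:ℝ) x, HasDerivAt (fun y : ℝ => li (y ^ α))
      (t ^ (α - 1) / Real.log t) t := by
    intro t ht
    rw [Set.uIcc_of_le hx] at ht
    have ht2 : (2:ℝ) ≤ t := ht.1
    have ht0 : (0:ℝ) < t := by linarith
    have h1t : (1:ℝ) < t ^ α := Real.one_lt_rpow_iff_of_pos ht0 |>.2 (Or.inl ⟨by linarith, hα⟩)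
    have hpow : HasDerivAt (fun y : ℝ => y ^ α) (α * t ^ (α - 1)) t :=
      Real.hasDerivAt_rpow_const (Or.inl ht0.ne')
    have := (hasDerivAt_li h1t).comp t hpow
    refine this.congr_deriv ?_
    symm
    rw [Real.log_rpow ht0]
    have hl : 0 < Real.log t := Real.log_pos (by linarith)
    field_simp
  have hcontk : ContinuousOn (fun t : ℝ => t ^ (α - 1) / Real.log t) (Set.uIcc (2:ℝ) x) := by
    rw [Set.uIcc_of_le hx]
    apply ContinuousOn.div
    · exact continuousOn_id.rpow_const fun t ht => Or.inl (show id t ≠ 0 from ne_of_gt (lt_of_lt_of_le two_pos ht.1))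
    · exact Real.continuousOn_log.mono fun t ht => by simp; linarith [ht.1]
    · exact fun t ht => (Real.log_pos (by linarith [ht.1])).ne'
  have hintk : IntervalIntegrable (fun t : ℝ => t ^ (α - 1) / Real.log t) volume 2 x := hcontk.intervalIntegrable
  have L := intervalIntegral.integral_eq_sub_of_hasDerivAt hk hintk
  set R : ℝ → ℝ := fun y => y ^ α / α * (Real.log y)⁻¹ + ∫ t in (2:ℝ)..y, (t ^ α / α) * (t * Real.log t ^ 2)⁻¹ with hR
  have hcH : ∀ {y : ℝ}, 2 ≤ y → ContinuousOn (fun t : ℝ => (t ^ α / α) * (t * Real.log t ^ 2)⁻¹) (Set.uIcc (2:ℝ) y) := by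
    intro y hy
    rw [Set.uIcc_of_le hy]
    apply ContinuousOn.mul
    · exact (continuousOn_id.rpow_const fun t ht => Or.inl (show id t ≠ 0 from ne_of_gt (lt_of_lt_of_le two_pos ht.1))).div_const α
    · apply ContinuousOn.inv₀
      · exact continuousOn_id.mul ((Real.continuousOn_log.mono fun t ht => by simp; linarith [ht.1]).pow 2)
      · intro t ht
        have hl : 0 < Real.log t := Real.log_pos (by linarith [ht.1])
        have ht0 : (0:ℝ) < t := by linarith [ht.1]
        positivity
  have hkR : ∀ t ∈ Set.uIcc (2:ℝ) x, HasDerivAt R (t ^ (α - 1) / Real.log t) t := by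
    intro t ht
    rw [Set.uIcc_of_le hx] at ht
    have ht2 : (2:ℝ) ≤ t := ht.1
    have ht0 : (0:ℝ) < t := by linarith
    have hl : 0 < Real.log t := Real.log_pos (by linarith)
    have h1 : HasDerivAt (fun y : ℝ => y ^ α / α) (t ^ (α - 1)) t := by
      have := (Real.hasDerivAt_rpow_const (p := α) (Or.inl ht0.ne')).div_const α
      refine this.congr_deriv ?_
      symm
      field_simp
    have h2 : HasDerivAt (fun y : ℝ => (Real.log y)⁻¹) (-(t⁻¹) / Real.log t ^ 2) t :=
      (Real.hasDerivAt_log ht0.ne').inv hl.ne'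
    have h3 := h1.mul h2
    have h4 : HasDerivAt (fun y : ℝ => ∫ t in (2:ℝ)..y, (t ^ α / α) * (t * Real.log t ^ 2)⁻¹)
        ((t ^ α / α) * (t * Real.log t ^ 2)⁻¹) t := by
      have hne : t * Real.log t ^ 2 ≠ 0 := by positivity
      apply intervalIntegral.integral_hasDerivAt_right
      · exact (hcH ht2).intervalIntegrable
      · refine ⟨Set.Ioi 1, Ioi_mem_nhds (by linarith), ContinuousOn.aestronglyMeasurable ?_ measurableSet_Ioi⟩
        apply ContinuousOn.mul
        · exact (continuousOn_id.rpow_const fun s hs => Or.inl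
            (show id s ≠ 0 from ne_of_gt (lt_trans one_pos hs))).div_const α
        · apply ContinuousOn.inv₀
          · exact continuousOn_id.mul ((Real.continuousOn_log.mono fun s hs => by
              simp; linarith [Set.mem_Ioi.mp hs]).pow 2)
          · intro s hs
            have hs1 : (1:ℝ) < s := hs
            have : 0 < Real.log s := Real.log_pos hs1
            have : (0:ℝ) < s := by linarith
            positivity
      · exact ((Real.continuousAt_rpow_const t α (Or.inl ht0.ne')).div_const α).mul
          ((continuousAt_id.mul ((Real.continuousAt_log ht0.ne').pow 2)).inv₀ hne)
    have := h3.add h4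
    refine this.congr_deriv ?_
    symm
    have hrw : t ^ α * t⁻¹ = t ^ (α - 1) := by
      rw [Real.rpow_sub ht0, Real.rpow_one, div_eq_mul_inv]
    field_simp
    nlinarith [hrw, sq_nonneg (Real.log t), Real.rpow_pos_of_pos ht0 α]
  have hR2 := intervalIntegral.integral_eq_sub_of_hasDerivAt hkR hintk
  rw [L] at hR2
  have : R x - R 2 = (x ^ α / α / Real.log x - (2:ℝ) ^ α / α / Real.log 2)
        + ∫ t in (2:ℝ)..x, (t ^ α / α) * (t * Real.log t ^ 2)⁻¹ := by
    simp only [hR]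
    rw [intervalIntegral.integral_same]
    ring
  exact hR2.trans this


section keyid
open intervalIntegral Set

lemma key_identity (ψ : StieltjesFunction ℝ) {x : ℝ} (hx : 2 < x) :
    ∫ u in Set.Ioc 2 x, (Real.log u)⁻¹ ∂ψ.measure
      = (ψ x - ψ 2) / Real.log x
        + ∫ t in (2:ℝ)..x, (ψ t - ψ 2) * (t * Real.log t ^ 2)⁻¹ := by
  set μ := ψ.measure.restrict (Set.Ioc 2 x) with hμ
  set ν := volume.restrict (Set.Ioo 2 x) with hν
  haveI : IsFiniteMeasure μ := by
    constructor
    rw [hμ, Measure.restrict_apply_univ, ψ.measure_Ioc]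
    exact ENNReal.ofReal_lt_top
  haveI : IsFiniteMeasure ν := by
    constructor
    rw [hν, Measure.restrict_apply_univ]
    exact lt_of_le_of_lt (measure_mono Set.Ioo_subset_Icc_self) (by simp)
  set f : ℝ → ℝ → ℝ := fun u t => if u ≤ t then (t * Real.log t ^ 2)⁻¹ else 0 with hf
  have hmeas : Measurable (Function.uncurry f) := by
    apply Measurable.ite (measurableSet_le measurable_fst measurable_snd)
    · exact ((measurable_snd.mul ((Real.measurable_log.comp measurable_snd).pow_const 2)).inv)
    · exact measurable_const
  have haeT : ∀ᵐ p : ℝ × ℝ ∂(μ.prod ν), p.1 ∈ Set.Ioc (2:ℝ) x ∧ p.2 ∈ Set.Ioo (2:ℝ) x := by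
    rw [hμ, hν, Measure.prod_restrict]
    have := ae_restrict_mem (μ := ψ.measure.prod volume)
      ((measurableSet_Ioc (a := (2:ℝ)) (b := x)).prod (measurableSet_Ioo (a := (2:ℝ)) (b := x)))
    filter_upwards [this] with p hp
    exact ⟨hp.1, hp.2⟩
  have hbound : ∀ t : ℝ, 2 ≤ t → (t * Real.log t ^ 2)⁻¹ ≤ (2 * Real.log 2 ^ 2)⁻¹ := by
    intro t ht
    have hl2 : 0 < Real.log 2 := Real.log_pos (by norm_num)
    have hlt : Real.log 2 ≤ Real.log t := Real.log_le_log (by norm_num) ht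
    have h1 : (0:ℝ) < 2 * Real.log 2 ^ 2 := by positivity
    apply inv_anti₀ h1
    have : Real.log 2 ^ 2 ≤ Real.log t ^ 2 := by nlinarith
    nlinarith
  have hInt : Integrable (Function.uncurry f) (μ.prod ν) := by
    refine Integrable.mono' (integrable_const ((2 * Real.log 2 ^ 2)⁻¹)) hmeas.aestronglyMeasurable ?_
    filter_upwards [haeT] with p hp
    rw [hf]
    simp only [Function.uncurry]
    split_ifs with h
    · rw [Real.norm_eq_abs, abs_of_nonneg (by
        have h2 : (2:ℝ) < p.2 := hp.2.1
        have : 0 < Real.log p.2 := Real.log_pos (by linarith)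
        positivity)]
      exact hbound _ hp.2.1.le
    · rw [norm_zero]
      have hl2 : 0 < Real.log 2 := Real.log_pos (by norm_num)
      positivity
  have swap := MeasureTheory.integral_integral_swap hInt
  have hψmono := ψ.mono
  have hψ2x : ψ 2 ≤ ψ x := hψmono hx.le
  -- left side
  have hL : (∫ u, ∫ t, f u t ∂ν ∂μ)
      = (∫ u in Set.Ioc 2 x, (Real.log u)⁻¹ ∂ψ.measure) - (ψ x - ψ 2) * (Real.log x)⁻¹ := by
    have hcongr : ∀ u ∈ Set.Ioc (2:ℝ) x, (∫ t, f u t ∂ν) = (Real.log u)⁻¹ - (Real.log x)⁻¹ := by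
      intro u hu
      have h1 : (fun t => f u t) = Set.indicator (Set.Ici u) (fun t => (t * Real.log t ^ 2)⁻¹) := by
        ext t
        rw [hf]
        simp [Set.indicator_apply, Set.mem_Ici]
      rw [h1, MeasureTheory.integral_indicator measurableSet_Ici, hν,
        Measure.restrict_restrict measurableSet_Ici]
      have h2 : Set.Ici u ∩ Set.Ioo 2 x = Set.Ico u x := by
        ext t
        constructor
        · rintro ⟨h3, _, h5⟩; exact ⟨h3, h5⟩
        · rintro ⟨h3, h4⟩; exact ⟨h3, lt_of_lt_of_le hu.1 h3, h4⟩
      rw [h2, MeasureTheory.integral_Ico_eq_integral_Ioo,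
        ← MeasureTheory.integral_Ioc_eq_integral_Ioo,
        ← intervalIntegral.integral_of_le hu.2]
      exact ftc_h hu.1.le hu.2
    have hae : ∀ᵐ u ∂μ, (∫ t, f u t ∂ν) = (Real.log u)⁻¹ - (Real.log x)⁻¹ := by
      rw [hμ]
      filter_upwards [ae_restrict_mem measurableSet_Ioc] with u hu using hcongr u hu
    rw [integral_congr_ae hae]
    have hint1 : Integrable (fun u => (Real.log u)⁻¹) μ := by
      refine Integrable.mono' (integrable_const ((Real.log 2)⁻¹))
        (Real.measurable_log.inv).aestronglyMeasurable ?_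
      rw [hμ]
      filter_upwards [ae_restrict_mem measurableSet_Ioc] with u hu
      have hl2 : 0 < Real.log 2 := Real.log_pos (by norm_num)
      have hlu : Real.log 2 ≤ Real.log u := Real.log_le_log (by norm_num) hu.1.le
      rw [Real.norm_eq_abs, abs_of_nonneg (inv_nonneg.mpr (by linarith))]
      exact inv_anti₀ hl2 hlu
    have hμuniv : (μ Set.univ).toReal = ψ x - ψ 2 := by
      rw [hμ, Measure.restrict_apply_univ, ψ.measure_Ioc, ENNReal.toReal_ofReal (by linarith)]
    rw [integral_sub hint1 (integrable_const _), MeasureTheory.integral_const, measureReal_def, hμuniv,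
      smul_eq_mul, hμ]
  -- right side
  have hR : (∫ t, ∫ u, f u t ∂μ ∂ν)
      = ∫ t in (2:ℝ)..x, (ψ t - ψ 2) * (t * Real.log t ^ 2)⁻¹ := by
    have hcongr : ∀ t ∈ Set.Ioo (2:ℝ) x, (∫ u, f u t ∂μ)
        = (ψ t - ψ 2) * (t * Real.log t ^ 2)⁻¹ := by
      intro t ht
      have h1 : (fun u => f u t) = Set.indicator (Set.Iic t)
          (fun _ => (t * Real.log t ^ 2)⁻¹) := by
        ext u
        rw [hf]
        simp [Set.indicator_apply, Set.mem_Iic]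
      have h2 : Set.Iic t ∩ Set.Ioc 2 x = Set.Ioc 2 t := by
        ext u
        constructor
        · rintro ⟨h3, h4, _⟩; exact ⟨h4, h3⟩
        · rintro ⟨h3, h4⟩; exact ⟨h4, h3, le_trans h4 ht.2.le⟩
      rw [h1, MeasureTheory.integral_indicator measurableSet_Iic, setIntegral_const, hμ, measureReal_def,
        Measure.restrict_apply measurableSet_Iic, h2, ψ.measure_Ioc,
        ENNReal.toReal_ofReal (by linarith [hψmono ht.1.le]), smul_eq_mul]
    have hae : ∀ᵐ t ∂ν, (∫ u, f u t ∂μ) = (ψ t - ψ 2) * (t * Real.log t ^ 2)⁻¹ := by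
      rw [hν]
      filter_upwards [ae_restrict_mem measurableSet_Ioo] with t ht using hcongr t ht
    rw [integral_congr_ae hae, hν, ← MeasureTheory.integral_Ioc_eq_integral_Ioo,
      ← intervalIntegral.integral_of_le hx.le]
  rw [hL, hR] at swap
  rw [div_eq_mul_inv]
  linarith [swap]

end keyid

end helpers

set_option maxHeartbeats 2000000 in
/-- Tauberian step converting the asymptotics of `ψ(x)` into counting asymptotics:
if `ψ` is nondecreasing and right-continuous with
`|ψ(u) - Σ_{i=0}^p u^{α_i}/α_i| ≤ C u^β` for `u ≥ 2`, where the `α_i` are positive and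
`0 < β < min_i α_i`, then there is `C' > 0` such that for all `x ≥ 4`,
`|∫_{(2,x]} (log u)⁻¹ dμ_ψ(u) - Σ_{i=0}^p li(x^{α_i})| ≤ C' x^β / log x`. -/
theorem tauberian_counting_asymptotics (p : ℕ) (hp : 1 ≤ p) (α : Fin (p + 1) → ℝ)
    (hα : ∀ i, 0 < α i) (β : ℝ) (hβ : 0 < β) (hβα : ∀ i, β < α i) (C : ℝ) (hC : 0 < C)
    (ψ : StieltjesFunction ℝ)
    (hψ : ∀ u : ℝ, 2 ≤ u → |ψ u - ∑ i, u ^ α i / α i| ≤ C * u ^ β) :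
    ∃ C' > 0, ∀ x : ℝ, 4 ≤ x →
      |(∫ u in Set.Ioc (2 : ℝ) x, (Real.log u)⁻¹ ∂ψ.measure) - ∑ i, li (x ^ α i)|
        ≤ C' * x ^ β / Real.log x := by
  have hl2 : 0 < Real.log 2 := Real.log_pos (by norm_num)
  set Φ : ℝ → ℝ := fun t => ∑ i, t ^ α i / α i with hΦ
  set c₀ : ℝ := ∑ i, (li ((2:ℝ) ^ α i) - (2:ℝ) ^ α i / α i / Real.log 2) with hc₀
  set K : ℝ := |ψ 2| / Real.log 2 + |c₀| with hK
  have hKnn : 0 ≤ K := by positivity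
  set C' : ℝ := (C + |ψ 2|) + 2 * (C * (Real.log 2 ^ 2)⁻¹) / β ^ 2 + 4 * C / β + K / β + 1
    with hC'
  refine ⟨C', by positivity, ?_⟩
  intro x hx4
  have hx2 : (2:ℝ) < x := by linarith
  have hx0 : (0:ℝ) < x := by linarith
  have hx1 : (1:ℝ) ≤ x := by linarith
  set lx : ℝ := Real.log x with hlx
  have hlx1 : 1 < lx := by
    rw [hlx, ← Real.log_exp 1]
    apply Real.log_lt_log (Real.exp_pos 1)
    have := Real.exp_one_lt_d9
    linarith
  have hlx0 : 0 < lx := by linarith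
  have hxβ0 : (0:ℝ) < x ^ β := Real.rpow_pos_of_pos hx0 β
  have hxβ1 : (1:ℝ) ≤ x ^ β := by
    calc (1:ℝ) = 1 ^ β := (Real.one_rpow β).symm
    _ ≤ x ^ β := Real.rpow_le_rpow (by norm_num) hx1 hβ.le
  -- key facts about log vs powers
  have k1 : β * lx ≤ x ^ β := by
    have := Real.log_le_rpow_div hx0.le hβ
    rw [le_div_iff₀ hβ] at this
    linarith [this]
  have k2 : β * (x ^ (β/2) * lx) ≤ 2 * x ^ β := by
    have h := Real.log_le_rpow_div hx0.le (half_pos hβ)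
    rw [le_div_iff₀ (half_pos hβ)] at h
    have hpos : (0:ℝ) ≤ x ^ (β/2) := (Real.rpow_pos_of_pos hx0 _).le
    have hmul : x ^ (β/2) * x ^ (β/2) = x ^ β := by
      rw [← Real.rpow_add hx0]
      norm_num
    nlinarith [mul_le_mul_of_nonneg_left h hpos]
  -- identity for the Stieltjes side
  have hA := key_identity ψ hx2
  -- identity for the li side
  have hIi : ∀ i : Fin (p+1), IntervalIntegrable
      (fun t : ℝ => (t ^ α i / α i) * (t * Real.log t ^ 2)⁻¹) volume 2 x := by
    intro i
    have e : (fun t : ℝ => (t ^ α i / α i) * (t * Real.log t ^ 2)⁻¹)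
        = fun t : ℝ => (t ^ α i * (t * Real.log t ^ 2)⁻¹) / α i := funext fun t => by ring
    rw [e]
    exact (intInt_rpow_mul_h le_rfl hx2.le).div_const (α i)
  have hB : ∑ i, li (x ^ α i)
      = c₀ + Φ x / lx + ∫ t in (2:ℝ)..x, Φ t * (t * Real.log t ^ 2)⁻¹ := by
    have hli : ∀ i : Fin (p+1), li (x ^ α i)
        = (li ((2:ℝ) ^ α i) - (2:ℝ) ^ α i / α i / Real.log 2) + x ^ α i / α i / lx
          + ∫ t in (2:ℝ)..x, (t ^ α i / α i) * (t * Real.log t ^ 2)⁻¹ := by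
      intro i
      have := li_eq (hα i) hx2.le
      rw [hlx]
      linarith
    rw [Finset.sum_congr rfl fun i _ => hli i, Finset.sum_add_distrib, Finset.sum_add_distrib]
    congr 1
    · congr 1
      simp only [hΦ]
      rw [Finset.sum_div]
    · rw [← intervalIntegral.integral_finset_sum fun i _ => hIi i]
      apply intervalIntegral.integral_congr
      intro t _
      simp only [hΦ]
      rw [Finset.sum_mul]
  -- integrability of the ψ-side integrand
  have hIg : IntervalIntegrable (fun t : ℝ => (ψ t - ψ 2) * (t * Real.log t ^ 2)⁻¹)
      volume 2 x := by
    rw [intervalIntegrable_iff_integrableOn_Ioc_of_le hx2.le]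
    refine Integrable.mono' (g := fun _ => (ψ x - ψ 2) * (2 * Real.log 2 ^ 2)⁻¹)
      (integrable_const _) ?_ ?_
    · exact (((ψ.mono.measurable).sub measurable_const).mul
        ((measurable_id.mul ((Real.measurable_log).pow_const 2)).inv)).aestronglyMeasurable
    · filter_upwards [ae_restrict_mem measurableSet_Ioc] with t ht
      rw [Real.norm_eq_abs, abs_mul, abs_of_nonneg (sub_nonneg.2 (ψ.mono ht.1.le)),
        abs_of_nonneg (h_nonneg ht.1.le)]
      exact mul_le_mul (sub_le_sub_right (ψ.mono ht.2) _) (h_le ht.1.le)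
        (h_nonneg ht.1.le) (sub_nonneg.2 (ψ.mono (by linarith [ht.1])))
  have hIΦh : IntervalIntegrable (fun t : ℝ => Φ t * (t * Real.log t ^ 2)⁻¹) volume 2 x := by
    have h2 := IntervalIntegrable.sum (μ := volume) (a := 2) (b := x) Finset.univ
      (f := fun i => fun t : ℝ => (t ^ α i / α i) * (t * Real.log t ^ 2)⁻¹) (fun i _ => hIi i)
    have e2 : (∑ i : Fin (p+1), fun t : ℝ => (t ^ α i / α i) * (t * Real.log t ^ 2)⁻¹)
        = fun t : ℝ => Φ t * (t * Real.log t ^ 2)⁻¹ := by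
      funext t
      rw [Finset.sum_apply, hΦ]
      rw [Finset.sum_mul]
    rwa [e2] at h2
  -- difference of the two integrals
  have hdiff : (∫ t in (2:ℝ)..x, (ψ t - ψ 2) * (t * Real.log t ^ 2)⁻¹)
      - (∫ t in (2:ℝ)..x, Φ t * (t * Real.log t ^ 2)⁻¹)
      = ∫ t in (2:ℝ)..x, (ψ t - ψ 2 - Φ t) * (t * Real.log t ^ 2)⁻¹ := by
    rw [← intervalIntegral.integral_sub hIg hIΦh]
    apply intervalIntegral.integral_congr
    intro t _
    ring
  -- pointwise bound and integral bound
  have hq : IntervalIntegrable (fun t : ℝ => (ψ t - ψ 2 - Φ t) * (t * Real.log t ^ 2)⁻¹)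
      volume 2 x := by
    have e : (fun t : ℝ => (ψ t - ψ 2) * (t * Real.log t ^ 2)⁻¹
          - Φ t * (t * Real.log t ^ 2)⁻¹)
        = fun t : ℝ => (ψ t - ψ 2 - Φ t) * (t * Real.log t ^ 2)⁻¹ := funext fun t => by ring
    rw [← e]
    exact hIg.sub hIΦh
  have hRHSint : IntervalIntegrable
      (fun t : ℝ => (C * t ^ β + |ψ 2|) * (t * Real.log t ^ 2)⁻¹) volume 2 x := by
    have e : (fun t : ℝ => (C * t ^ β + |ψ 2|) * (t * Real.log t ^ 2)⁻¹)
        = fun t : ℝ => C * (t ^ β * (t * Real.log t ^ 2)⁻¹)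
            + |ψ 2| * (t * Real.log t ^ 2)⁻¹ := funext fun t => by ring
    rw [e]
    exact ((intInt_rpow_mul_h le_rfl hx2.le).const_mul C).add
      ((intInt_h le_rfl hx2.le).const_mul (|ψ 2|))
  have habs : |∫ t in (2:ℝ)..x, (ψ t - ψ 2 - Φ t) * (t * Real.log t ^ 2)⁻¹|
      ≤ ∫ t in (2:ℝ)..x, (C * t ^ β + |ψ 2|) * (t * Real.log t ^ 2)⁻¹ := by
    refine le_trans (intervalIntegral.abs_integral_le_integral_abs hx2.le) ?_
    apply intervalIntegral.integral_mono_on hx2.le hq.abs hRHSint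
    intro t ht
    rw [abs_mul, abs_of_nonneg (h_nonneg ht.1)]
    apply mul_le_mul_of_nonneg_right _ (h_nonneg ht.1)
    have h1 : |ψ t - ψ 2 - Φ t| ≤ |ψ t - Φ t| + |ψ 2| := by
      have := abs_sub (ψ t - Φ t) (ψ 2)
      have e : ψ t - Φ t - ψ 2 = ψ t - ψ 2 - Φ t := by ring
      rw [e] at this
      exact this
    have h2 : |(ψ : ℝ → ℝ) t - Φ t| ≤ C * t ^ β := by
      simp only [hΦ]
      exact hψ t ht.1
    linarith
  -- splitting the bounding integral
  have hsplitRHS : ∫ t in (2:ℝ)..x, (C * t ^ β + |ψ 2|) * (t * Real.log t ^ 2)⁻¹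
      = C * (∫ t in (2:ℝ)..x, t ^ β * (t * Real.log t ^ 2)⁻¹)
        + |ψ 2| * ((Real.log 2)⁻¹ - lx⁻¹) := by
    rw [← ftc_h le_rfl hx2.le, ← intervalIntegral.integral_const_mul,
      ← intervalIntegral.integral_const_mul,
      ← intervalIntegral.integral_add ((intInt_rpow_mul_h le_rfl hx2.le).const_mul C)
        ((intInt_h le_rfl hx2.le).const_mul (|ψ 2|))]
    apply intervalIntegral.integral_congr
    intro t _
    ring
  -- bounding the main integral by splitting at √x
  set s : ℝ := Real.sqrt x with hs
  have hs2 : (2:ℝ) ≤ s := by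
    rw [hs]
    rw [show (2:ℝ) = Real.sqrt 4 by rw [show (4:ℝ) = 2^2 by norm_num, Real.sqrt_sq (by norm_num)]]
    exact Real.sqrt_le_sqrt hx4
  have hsx : s ≤ x := by
    rw [hs]
    calc Real.sqrt x ≤ Real.sqrt (x ^ 2) := Real.sqrt_le_sqrt (by nlinarith)
    _ = x := Real.sqrt_sq hx0.le
  have hlogs : Real.log s = lx / 2 := by rw [hs, Real.log_sqrt hx0.le, hlx]
  have hsβ : s ^ β = x ^ (β/2) := by
    rw [hs, Real.sqrt_eq_rpow, ← Real.rpow_mul hx0.le, show (1/2 : ℝ) * β = β / 2 by ring]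
  have hs0 : (0:ℝ) < s := by linarith
  have hI1 : ∫ t in (2:ℝ)..s, t ^ β * (t * Real.log t ^ 2)⁻¹
      ≤ x ^ (β/2) / β * (Real.log 2 ^ 2)⁻¹ := by
    have hmono : ∫ t in (2:ℝ)..s, t ^ β * (t * Real.log t ^ 2)⁻¹
        ≤ ∫ t in (2:ℝ)..s, t ^ (β - 1) * (Real.log 2 ^ 2)⁻¹ := by
      apply intervalIntegral.integral_mono_on hs2 (intInt_rpow_mul_h le_rfl hs2)
        (((continuousOn_id.rpow_const fun t ht => Or.inl (show id t ≠ 0 from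
          ne_of_gt (lt_of_lt_of_le two_pos (by rw [Set.uIcc_of_le hs2] at ht; exact ht.1)))).mul
          continuousOn_const).intervalIntegrable)
      intro t ht
      have ht0 : (0:ℝ) < t := by linarith [ht.1]
      have hlt : Real.log 2 ≤ Real.log t := Real.log_le_log (by norm_num) ht.1
      have hl : 0 < Real.log t := by linarith
      have e1 : t ^ β * (t * Real.log t ^ 2)⁻¹ = t ^ (β - 1) * (Real.log t ^ 2)⁻¹ := by
        rw [Real.rpow_sub ht0, Real.rpow_one]
        field_simp
      rw [e1]
      apply mul_le_mul_of_nonneg_left _ (Real.rpow_nonneg ht0.le _)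
      apply inv_anti₀ (by positivity)
      nlinarith
    have hcalc : ∫ t in (2:ℝ)..s, t ^ (β - 1) * (Real.log 2 ^ 2)⁻¹
        = (s ^ β - 2 ^ β) / β * (Real.log 2 ^ 2)⁻¹ := by
      rw [intervalIntegral.integral_mul_const, integral_rpow (Or.inl (by linarith : (-1:ℝ) < β - 1))]
      rw [show β - 1 + 1 = β from by ring]
    have h2β : (0:ℝ) ≤ (2:ℝ) ^ β := Real.rpow_nonneg (by norm_num) β
    have : (s ^ β - 2 ^ β) / β ≤ x ^ (β/2) / β := by
      rw [← hsβ]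
      exact (div_le_div_iff_of_pos_right hβ).2 (by linarith)
    calc ∫ t in (2:ℝ)..s, t ^ β * (t * Real.log t ^ 2)⁻¹
        ≤ (s ^ β - 2 ^ β) / β * (Real.log 2 ^ 2)⁻¹ := by rw [← hcalc]; exact hmono
      _ ≤ x ^ (β/2) / β * (Real.log 2 ^ 2)⁻¹ :=
          mul_le_mul_of_nonneg_right this (by positivity)
  have hI2 : ∫ t in s..x, t ^ β * (t * Real.log t ^ 2)⁻¹
      ≤ x ^ β / β * (4 / lx) := by
    have hmono : ∫ t in s..x, t ^ β * (t * Real.log t ^ 2)⁻¹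
        ≤ ∫ t in s..x, t ^ (β - 1) * (4 / lx) := by
      apply intervalIntegral.integral_mono_on hsx (intInt_rpow_mul_h hs2 hsx)
        (((continuousOn_id.rpow_const fun t ht => Or.inl (show id t ≠ 0 from
          ne_of_gt (lt_of_lt_of_le two_pos (by rw [Set.uIcc_of_le hsx] at ht; exact le_trans hs2 ht.1)))).mul
          continuousOn_const).intervalIntegrable)
      intro t ht
      have ht2 : (2:ℝ) ≤ t := le_trans hs2 ht.1
      have ht0 : (0:ℝ) < t := by linarith
      have hlt : lx / 2 ≤ Real.log t := by
        rw [← hlogs]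
        exact Real.log_le_log hs0 ht.1
      have hl : 0 < Real.log t := by linarith
      have e1 : t ^ β * (t * Real.log t ^ 2)⁻¹ = t ^ (β - 1) * (Real.log t ^ 2)⁻¹ := by
        rw [Real.rpow_sub ht0, Real.rpow_one]
        field_simp
      rw [e1]
      apply mul_le_mul_of_nonneg_left _ (Real.rpow_nonneg ht0.le _)
      have h4 : lx / 4 ≤ Real.log t ^ 2 := by nlinarith
      calc (Real.log t ^ 2)⁻¹ ≤ (lx / 4)⁻¹ := inv_anti₀ (by positivity) h4
        _ = 4 / lx := by rw [inv_div]
    have hcalc : ∫ t in s..x, t ^ (β - 1) * (4 / lx)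
        = (x ^ β - s ^ β) / β * (4 / lx) := by
      rw [intervalIntegral.integral_mul_const, integral_rpow (Or.inl (by linarith : (-1:ℝ) < β - 1))]
      rw [show β - 1 + 1 = β from by ring]
    have hsβ0 : (0:ℝ) ≤ s ^ β := Real.rpow_nonneg hs0.le β
    have : (x ^ β - s ^ β) / β ≤ x ^ β / β :=
      (div_le_div_iff_of_pos_right hβ).2 (by linarith)
    calc ∫ t in s..x, t ^ β * (t * Real.log t ^ 2)⁻¹
        ≤ (x ^ β - s ^ β) / β * (4 / lx) := by rw [← hcalc]; exact hmono
      _ ≤ x ^ β / β * (4 / lx) := mul_le_mul_of_nonneg_right this (by positivity)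
  have hIsplit : (∫ t in (2:ℝ)..s, t ^ β * (t * Real.log t ^ 2)⁻¹)
      + ∫ t in s..x, t ^ β * (t * Real.log t ^ 2)⁻¹
      = ∫ t in (2:ℝ)..x, t ^ β * (t * Real.log t ^ 2)⁻¹ :=
    intervalIntegral.integral_add_adjacent_intervals
      (intInt_rpow_mul_h le_rfl hs2) (intInt_rpow_mul_h hs2 hsx)
  -- assembling everything
  have hABexpr : (∫ u in Set.Ioc (2:ℝ) x, (Real.log u)⁻¹ ∂ψ.measure) - ∑ i, li (x ^ α i)
      = (ψ x - Φ x - ψ 2) / lx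
        + (∫ t in (2:ℝ)..x, (ψ t - ψ 2 - Φ t) * (t * Real.log t ^ 2)⁻¹) - c₀ := by
    rw [hA, hB, ← hdiff]
    have e : (ψ x - ψ 2) / Real.log x - Φ x / lx = (ψ x - Φ x - ψ 2) / lx := by
      rw [← hlx]; ring
    rw [← hlx]
    ring
  have hT1 : |(ψ x - Φ x - ψ 2) / lx| ≤ (C * x ^ β + |ψ 2|) / lx := by
    rw [abs_div, abs_of_pos hlx0]
    apply (div_le_div_iff_of_pos_right hlx0).2
    have h1 : |ψ x - Φ x - ψ 2| ≤ |ψ x - Φ x| + |ψ 2| := by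
      have h0 := abs_sub (ψ x - Φ x) (ψ 2)
      have e : ψ x - Φ x - ψ 2 = ψ x - Φ x - ψ 2 := rfl
      exact h0
    have h2 : |(ψ : ℝ → ℝ) x - Φ x| ≤ C * x ^ β := by
      simp only [hΦ]
      exact hψ x (by linarith)
    linarith
  -- combine integral bounds
  have hIbound : ∫ t in (2:ℝ)..x, t ^ β * (t * Real.log t ^ 2)⁻¹
      ≤ x ^ (β/2) / β * (Real.log 2 ^ 2)⁻¹ + x ^ β / β * (4 / lx) := by
    rw [← hIsplit]
    linarith [hI1, hI2]
  have hT2 : |∫ t in (2:ℝ)..x, (ψ t - ψ 2 - Φ t) * (t * Real.log t ^ 2)⁻¹|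
      ≤ C * (x ^ (β/2) / β * (Real.log 2 ^ 2)⁻¹ + x ^ β / β * (4 / lx))
        + |ψ 2| * ((Real.log 2)⁻¹ - lx⁻¹) := by
    have := mul_le_mul_of_nonneg_left hIbound hC.le
    rw [hsplitRHS] at habs
    linarith
  -- overall triangle inequality
  have habs3 : |(∫ u in Set.Ioc (2:ℝ) x, (Real.log u)⁻¹ ∂ψ.measure) - ∑ i, li (x ^ α i)|
      ≤ |(ψ x - Φ x - ψ 2) / lx|
        + |∫ t in (2:ℝ)..x, (ψ t - ψ 2 - Φ t) * (t * Real.log t ^ 2)⁻¹| + |c₀| := by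
    rw [hABexpr]
    have h0 := abs_sub ((ψ x - Φ x - ψ 2) / lx
      + ∫ t in (2:ℝ)..x, (ψ t - ψ 2 - Φ t) * (t * Real.log t ^ 2)⁻¹) c₀
    have h1 := abs_add_le ((ψ x - Φ x - ψ 2) / lx)
      (∫ t in (2:ℝ)..x, (ψ t - ψ 2 - Φ t) * (t * Real.log t ^ 2)⁻¹)
    linarith
  -- termwise bounds against x^β / lx
  have u1 : (C * x ^ β + |ψ 2|) / lx ≤ (C + |ψ 2|) * x ^ β / lx :=
    (div_le_div_iff_of_pos_right hlx0).2 (by nlinarith [hxβ1, abs_nonneg (ψ 2)])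
  have u2 : C * (x ^ (β/2) / β * (Real.log 2 ^ 2)⁻¹)
      ≤ 2 * (C * (Real.log 2 ^ 2)⁻¹) / β ^ 2 * x ^ β / lx := by
    have := half_helper (C2 := C * (Real.log 2 ^ 2)⁻¹) (by positivity) hβ hlx0 k2
    linarith [this]
  have u3 : C * (x ^ β / β * (4 / lx)) = 4 * C / β * x ^ β / lx := by ring
  have u4 : |ψ 2| * ((Real.log 2)⁻¹ - lx⁻¹) ≤ |ψ 2| / Real.log 2 := by
    have h0 : 0 ≤ |ψ 2| * lx⁻¹ := by positivity
    rw [div_eq_mul_inv]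
    nlinarith
  have u5 : K ≤ K / β * x ^ β / lx := const_le_helper hKnn hβ hlx0 k1
  have hm : 0 ≤ x ^ β / lx := by positivity
  rw [hC']
  have expand : ((C + |ψ 2|) + 2 * (C * (Real.log 2 ^ 2)⁻¹) / β ^ 2 + 4 * C / β + K / β + 1)
      * x ^ β / lx
      = (C + |ψ 2|) * x ^ β / lx + 2 * (C * (Real.log 2 ^ 2)⁻¹) / β ^ 2 * x ^ β / lx
        + 4 * C / β * x ^ β / lx + K / β * x ^ β / lx + x ^ β / lx := by ring
  rw [hlx] at expand
  rw [expand]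
  rw [hK] at u5
  rw [hlx] at u1 u2 u3 u5 hm habs3 hT1 hT2
  linarith
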